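/- Let X be a path-connected topological space, x₀ ∈ X, and Q ⊆ X × X a subset that contains X × {x₀} and admits a motion planner. Then the map ι : X → X × X sending x to (x, x₀) is homotopic to the diagonal map Δ : X → X × X sending x to (x, x). -/

import Mathlib

open Set

/-- `Q ⊆ X × X` admits a motion planner: a continuous map `s` from `Q` to the path
space `P(X) = C(I, X)` (with the compact-open topology) that is a section of the
endpoint map `π : C(I, X) → X × X`, `γ ↦ (γ 0, γ 1)`. -/
def AdmitsMotionPlanner {X : Type*} [TopologicalSpace X] (Q : Set (X × X)) : Prop :=
  ∃ s : C(Q, C(unitInterval, X)), ∀ q : Q, ((s q) 0, (s q) 1) = (q : X × X)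

/-- `X × X` is covered by `k` open sets, each admitting a motion planner. -/
def TCCover (X : Type*) [TopologicalSpace X] (k : ℕ) : Prop :=
  ∃ Q : Fin k → Set (X × X),
    (∀ i, IsOpen (Q i)) ∧ (⋃ i, Q i) = Set.univ ∧ ∀ i, AdmitsMotionPlanner (Q i)

/-- The (unreduced) topological complexity of `X`: the least `k` such that `X × X`
can be covered by `k` open sets, each admitting a motion planner. -/
noncomputable def topologicalComplexity (X : Type*) [TopologicalSpace X] : ℕ :=
  sInf {k | TCCover X k}

/-- Let `X` be a path-connected topological space, `x₀ ∈ X`, and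
`Q ⊆ X × X` a subset that contains `X × {x₀}` and admits a motion planner.  Then the
map `ι : X → X × X`, `x ↦ (x, x₀)`, is homotopic to the diagonal `Δ : X → X × X`,
`x ↦ (x, x)`. -/
theorem planner_slice_homotopic_diag
    (X : Type*) [TopologicalSpace X] [PathConnectedSpace X] (x₀ : X)
    (Q : Set (X × X)) (hQ : Set.univ ×ˢ ({x₀} : Set X) ⊆ Q)
    (hplan : AdmitsMotionPlanner Q) :
    ContinuousMap.Homotopic
      (⟨fun x => (x, x₀), by continuity⟩ : C(X, X × X))
      (⟨fun x => (x, x), by continuity⟩ : C(X, X × X)) := by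
  obtain ⟨s, hs⟩ := hplan
  have hf : Continuous fun x : X => (⟨(x, x₀), hQ (by simp)⟩ : Q) := by
    apply Continuous.subtype_mk
    continuity
  refine ⟨⟨⟨fun p => (p.2, s ⟨(p.2, x₀), hQ (by simp)⟩ (unitInterval.symm p.1)), ?_⟩, ?_, ?_⟩⟩
  · apply Continuous.prodMk continuous_snd
    exact ContinuousEval.continuous_eval.comp
      ((s.continuous.comp (hf.comp continuous_snd)).prodMk
        (unitInterval.continuous_symm.comp continuous_fst))
  · intro x
    simp only [ContinuousMap.coe_mk]
    have := hs ⟨(x, x₀), hQ (by simp)⟩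
    have h1 : (s ⟨(x, x₀), hQ (by simp)⟩) 1 = x₀ := congrArg Prod.snd this
    simpa [unitInterval.symm] using h1
  · intro x
    simp only [ContinuousMap.coe_mk]
    have := hs ⟨(x, x₀), hQ (by simp)⟩
    have h0 : (s ⟨(x, x₀), hQ (by simp)⟩) 0 = x := congrArg Prod.fst this
    simpa [unitInterval.symm] using h0
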